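/- Let H be a real Hilbert space and A : H →L[ℝ] H a bounded nonnegative selfadjoint operator. Define the bilinear form ⟪(f₁,g₁),(f₂,g₂)⟫_H = ⟨A f₁, f₂⟩ + (1/4)⟨f₁, f₂⟩ + ⟨g₁ + (1/2) f₁, g₂ + (1/2) f₂⟩ on H × H, and L(f,g) = (g, −A f − g). Then for all f, g ∈ H one has ⟪L(f,g), (f,g)⟫_H = −(1/2)(⟨A f, f⟩ + ‖g‖²); in particular −L is accretive with respect to this inner product. -/
import Mathlib

open scoped RealInnerProductSpace

theorem stmt_1 {H : Type*} [NormedAddCommGroup H] [InnerProductSpace ℝ H] [CompleteSpace H]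
    (A : H →L[ℝ] H) (hA : IsSelfAdjoint A) (hApos : ∀ x : H, 0 ≤ ⟪A x, x⟫)
    (f g : H) :
    (fun (p q : H × H) =>
        ⟪A p.1, q.1⟫ + (1 / 4) * ⟪p.1, q.1⟫
          + ⟪p.2 + (1 / 2 : ℝ) • p.1, q.2 + (1 / 2 : ℝ) • q.1⟫)
      ((g, -A f - g) : H × H) ((f, g) : H × H)
      = -(1 / 2) * (⟪A f, f⟫ + ‖g‖ ^ 2) := by
  have hsym : ⟪A g, f⟫ = ⟪A f, g⟫ := by
    nth_rewrite 1 [← hA.adjoint_eq]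
    rw [ContinuousLinearMap.adjoint_inner_left, real_inner_comm]
  simp only [inner_add_add_self, inner_sub_left, inner_add_left, inner_add_right,
    inner_sub_right, inner_neg_left, inner_smul_left, inner_smul_right, real_inner_self_eq_norm_sq,
    RCLike.ofReal_real_eq_id, id_eq, conj_trivial]
  linarith [hsym]
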